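/- On ℝ³ with coordinates (y,z,p), the 1-forms σ₁ = sinh(y)cosh(z) dp − sinh(z) dy, σ₂ = −sinh(y)sinh(z) dp + cosh(z) dy, σ₃ = −dz − cosh(y) dp satisfy the structure equations dσ₁ = −σ₂∧σ₃, dσ₂ = −σ₁∧σ₃, dσ₃ = σ₁∧σ₂ at every point of ℝ³. -/

import Mathlib

/-!
STATEMENT 2: On ℝ³ with coordinates (y,z,p), the 1-forms
σ₁ = sinh(y)cosh(z) dp − sinh(z) dy, σ₂ = −sinh(y)sinh(z) dp + cosh(z) dy,
σ₃ = −dz − cosh(y) dp satisfy dσ₁ = −σ₂∧σ₃, dσ₂ = −σ₁∧σ₃, dσ₃ = σ₁∧σ₂.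
-/

noncomputable section

open Real

/-- the coordinate differentials dy, dz, dp on ℝ³ with coordinates (y,z,p) -/
def dc (i : Fin 3) : (Fin 3 → ℝ) →L[ℝ] ℝ := ContinuousLinearMap.proj i

/-- exterior derivative of a 1-form -/
def extd {n : ℕ} (ω : (Fin n → ℝ) → ((Fin n → ℝ) →L[ℝ] ℝ)) :
    (Fin n → ℝ) → (Fin n → ℝ) → (Fin n → ℝ) → ℝ :=
  fun a u v => fderiv ℝ (fun x => ω x v) a u - fderiv ℝ (fun x => ω x u) a v

/-- wedge product of two 1-forms -/
def wedge {n : ℕ} (ω η : (Fin n → ℝ) → ((Fin n → ℝ) →L[ℝ] ℝ)) :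
    (Fin n → ℝ) → (Fin n → ℝ) → (Fin n → ℝ) → ℝ :=
  fun a u v => ω a u * η a v - ω a v * η a u

/-- σ₁ = sinh(y)cosh(z) dp − sinh(z) dy -/
def σ₁ : (Fin 3 → ℝ) → ((Fin 3 → ℝ) →L[ℝ] ℝ) :=
  fun a => (sinh (a 0) * cosh (a 1)) • dc 2 - sinh (a 1) • dc 0

/-- σ₂ = −sinh(y)sinh(z) dp + cosh(z) dy -/
def σ₂ : (Fin 3 → ℝ) → ((Fin 3 → ℝ) →L[ℝ] ℝ) :=
  fun a => -((sinh (a 0) * sinh (a 1)) • dc 2) + cosh (a 1) • dc 0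

/-- σ₃ = −dz − cosh(y) dp -/
def σ₃ : (Fin 3 → ℝ) → ((Fin 3 → ℝ) →L[ℝ] ℝ) :=
  fun a => -dc 1 - cosh (a 0) • dc 2

lemma hasF_coord (i : Fin 3) (a : Fin 3 → ℝ) :
    HasFDerivAt (fun x : Fin 3 → ℝ => x i) (dc i) a :=
  (ContinuousLinearMap.proj i : (Fin 3 → ℝ) →L[ℝ] ℝ).hasFDerivAt

lemma hasF_sinh (i : Fin 3) (a : Fin 3 → ℝ) :
    HasFDerivAt (fun x : Fin 3 → ℝ => sinh (x i)) (cosh (a i) • dc i) a :=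
  by have := (Real.hasDerivAt_sinh (a i)).comp_hasFDerivAt a (hasF_coord i a); exact this

lemma hasF_cosh (i : Fin 3) (a : Fin 3 → ℝ) :
    HasFDerivAt (fun x : Fin 3 → ℝ => cosh (x i)) (sinh (a i) • dc i) a :=
  by have := (Real.hasDerivAt_cosh (a i)).comp_hasFDerivAt a (hasF_coord i a); exact this

lemma fd1 (a w v : Fin 3 → ℝ) :
    fderiv ℝ (fun x => σ₁ x v) a w =
      cosh (a 0) * cosh (a 1) * w 0 * v 2 + sinh (a 0) * sinh (a 1) * w 1 * v 2
        - cosh (a 1) * w 1 * v 0 := by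
  have e : (fun x => σ₁ x v) =
      fun x : Fin 3 → ℝ => sinh (x 0) * cosh (x 1) * v 2 - sinh (x 1) * v 0 := by
    ext x; simp [σ₁, dc]
  have h := (((hasF_sinh 0 a).mul (hasF_cosh 1 a)).mul_const (v 2)).sub
    ((hasF_sinh 1 a).mul_const (v 0))
  have h' : HasFDerivAt (fun x : Fin 3 → ℝ => sinh (x 0) * cosh (x 1) * v 2 - sinh (x 1) * v 0) _ a := h
  rw [e, h'.fderiv]
  simp [dc]
  ring

lemma fd2 (a w v : Fin 3 → ℝ) :
    fderiv ℝ (fun x => σ₂ x v) a w =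
      -(cosh (a 0) * sinh (a 1) * w 0 * v 2) - sinh (a 0) * cosh (a 1) * w 1 * v 2
        + sinh (a 1) * w 1 * v 0 := by
  have e : (fun x => σ₂ x v) =
      fun x : Fin 3 → ℝ => -(sinh (x 0) * sinh (x 1) * v 2) + cosh (x 1) * v 0 := by
    ext x; simp [σ₂, dc]
  have h := ((((hasF_sinh 0 a).mul (hasF_sinh 1 a)).mul_const (v 2)).neg).add
    ((hasF_cosh 1 a).mul_const (v 0))
  have h' : HasFDerivAt (fun x : Fin 3 → ℝ => -(sinh (x 0) * sinh (x 1) * v 2) + cosh (x 1) * v 0) _ a := h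
  rw [e, h'.fderiv]
  simp [dc]
  ring

lemma fd3 (a w v : Fin 3 → ℝ) :
    fderiv ℝ (fun x => σ₃ x v) a w = -(sinh (a 0) * w 0 * v 2) := by
  have e : (fun x => σ₃ x v) =
      fun x : Fin 3 → ℝ => -v 1 - cosh (x 0) * v 2 := by
    ext x; simp [σ₃, dc]
  have h := (hasFDerivAt_const (-v 1) a).sub ((hasF_cosh 0 a).mul_const (v 2))
  have h' : HasFDerivAt (fun x : Fin 3 → ℝ => -v 1 - cosh (x 0) * v 2) _ a := h
  rw [e, h'.fderiv]
  simp [dc]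
  ring

theorem hyperboloid_coframe_structure_equations :
    ∀ (a u v : Fin 3 → ℝ),
      extd σ₁ a u v = -(wedge σ₂ σ₃ a u v) ∧
      extd σ₂ a u v = -(wedge σ₁ σ₃ a u v) ∧
      extd σ₃ a u v = wedge σ₁ σ₂ a u v := by
  intro a u v
  refine ⟨?_, ?_, ?_⟩ <;>
    (simp only [extd, fd1, fd2, fd3]
     simp only [wedge, σ₁, σ₂, σ₃, dc,
       ContinuousLinearMap.sub_apply, ContinuousLinearMap.add_apply,
       ContinuousLinearMap.neg_apply, ContinuousLinearMap.smul_apply,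
       ContinuousLinearMap.proj_apply, smul_eq_mul])
  · ring
  · ring
  · linear_combination (u 0 * v 2 - u 2 * v 0) * sinh (a 0) * Real.cosh_sq_sub_sinh_sq (a 1)

end
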